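/- Optimal strategy of the AFS model, Version 1 (constant resilience, Theorem 4.1 of Alfonsi–Fruth–Schied as restated in the paper): let ρ > 0 be constant and suppose the function h₁(x) := F⁻¹(x) − e^{−ρτ}·F⁻¹(e^{−ρτ}x) is one-to-one. Then the cost functional C⁽¹⁾ (with ρ̄ ≡ ρ, i.e. ā(x) = e^{−ρτ} for all x) has a unique minimizer ξ = (ξ₀,…,ξ_N) on Ξ. The initial order ξ₀ is the unique solution of F⁻¹(X₀ − Nξ₀(1 − e^{−ρτ})) = h₁(ξ₀)/(1 − e^{−ρτ}); the intermediate orders satisfy ξ₁ = … = ξ_{N−1} = ξ₀(1 − e^{−ρτ}); the final order is ξ_N = X₀ − ∑_{n=0}^{N−1} ξₙ; and ξₙ > 0 for all n. -/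

import Mathlib

open Real Filter Finset

noncomputable def Fi (f : ℝ → ℝ) (x : ℝ) : ℝ := ∫ y in (0:ℝ)..x, f y
noncomputable def Ft (f : ℝ → ℝ) (x : ℝ) : ℝ := ∫ y in (0:ℝ)..x, y * f y
noncomputable def Gf (f Finv : ℝ → ℝ) (x : ℝ) : ℝ := Ft f (Finv x)
noncomputable def EvC (a : ℝ) (x : ℕ → ℝ) : ℕ → ℝ
  | 0 => 0
  | n + 1 => a * (EvC a x n + x n)
noncomputable def C1C (f Finv : ℝ → ℝ) (a : ℝ) (N : ℕ) (x : ℕ → ℝ) : ℝ :=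
  ∑ n ∈ Finset.range (N + 1), (Gf f Finv (EvC a x n + x n) - Gf f Finv (EvC a x n))

lemma tangent_lt {Φ φ : ℝ → ℝ} (hΦ : ∀ x, HasDerivAt Φ (φ x) x)
    (hφ : StrictMono φ) (p u : ℝ) (hne : u ≠ p) :
    Φ p + φ p * (u - p) < Φ u := by
  have hcont : ∀ s t : ℝ, ContinuousOn Φ (Set.Icc s t) :=
    fun s t => fun x _ => (hΦ x).continuousAt.continuousWithinAt
  rcases hne.lt_or_gt with hlt | hlt
  · obtain ⟨c, hc, hceq⟩ := exists_hasDerivAt_eq_slope Φ φ hlt (hcont u p)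
      (fun x _ => hΦ x)
    have h1 : φ c < φ p := hφ hc.2
    rw [eq_div_iff (by linarith [hc.1, hc.2] : p - u ≠ 0)] at hceq
    nlinarith [hc.1, hc.2]
  · obtain ⟨c, hc, hceq⟩ := exists_hasDerivAt_eq_slope Φ φ hlt (hcont p u)
      (fun x _ => hΦ x)
    have h1 : φ p < φ c := hφ hc.1
    rw [eq_div_iff (by linarith [hc.1, hc.2] : u - p ≠ 0)] at hceq
    nlinarith [hc.1, hc.2]

lemma tangent_le {Φ φ : ℝ → ℝ} (hΦ : ∀ x, HasDerivAt Φ (φ x) x)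
    (hφ : StrictMono φ) (p u : ℝ) :
    Φ p + φ p * (u - p) ≤ Φ u := by
  rcases eq_or_ne u p with rfl | hne
  · simp
  · exact (tangent_lt hΦ hφ p u hne).le

lemma sum_eq_u (a : ℝ) (y : ℕ → ℝ) (m : ℕ) :
    ∑ n ∈ Finset.range (m+1), y n
      = (EvC a y m + y m) + (1 - a) * ∑ n ∈ Finset.range m, (EvC a y n + y n) := by
  induction m with
  | zero => simp [EvC]
  | succ m ih =>
      rw [Finset.sum_range_succ, ih, Finset.sum_range_succ]
      have : EvC a y (m+1) = a * (EvC a y m + y m) := rfl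
      rw [this]; ring

lemma cost_eq_u (f Finv : ℝ → ℝ) (a : ℝ) (y : ℕ → ℝ) (hG0 : Gf f Finv 0 = 0) (m : ℕ) :
    ∑ n ∈ Finset.range (m+1), (Gf f Finv (EvC a y n + y n) - Gf f Finv (EvC a y n))
      = Gf f Finv (EvC a y m + y m)
        + ∑ n ∈ Finset.range m,
            (Gf f Finv (EvC a y n + y n) - Gf f Finv (a * (EvC a y n + y n))) := by
  induction m with
  | zero => simp [EvC, hG0]
  | succ m ih =>
      rw [Finset.sum_range_succ, ih, Finset.sum_range_succ]
      have : EvC a y (m+1) = a * (EvC a y m + y m) := rfl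
      rw [this]; ring

theorem afs_version1_optimal_strategy
    (f Finv : ℝ → ℝ) (hf : Continuous f) (hfpos : ∀ x, 0 < f x)
    (htop : Tendsto (Fi f) atTop atTop) (hbot : Tendsto (Fi f) atBot atBot)
    (hFinv₁ : ∀ x, Fi f (Finv x) = x) (hFinv₂ : ∀ x, Finv (Fi f x) = x)
    (τ : ℝ) (hτ : 0 < τ) (ρc : ℝ) (hρc : 0 < ρc)
    (a : ℝ) (ha : a = Real.exp (-(ρc * τ)))
    (N : ℕ) (hN : 1 ≤ N) (X₀ : ℝ) (hX₀ : 0 < X₀)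
    (hh1 : Function.Injective (fun x : ℝ => Finv x - a * Finv (a * x))) :
    ∃ ξ : ℕ → ℝ,
      (∑ n ∈ Finset.range (N + 1), ξ n = X₀) ∧
      (∀ y : ℕ → ℝ, (∑ n ∈ Finset.range (N + 1), y n = X₀) →
        C1C f Finv a N ξ ≤ C1C f Finv a N y) ∧
      (∀ y : ℕ → ℝ, (∑ n ∈ Finset.range (N + 1), y n = X₀) →
        (∀ z : ℕ → ℝ, (∑ n ∈ Finset.range (N + 1), z n = X₀) →
          C1C f Finv a N y ≤ C1C f Finv a N z) →
        ∀ n ≤ N, y n = ξ n) ∧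
      (Finv (X₀ - (N : ℝ) * (ξ 0 * (1 - a))) = (Finv (ξ 0) - a * Finv (a * ξ 0)) / (1 - a)) ∧
      (∀ z : ℝ, Finv (X₀ - (N : ℝ) * (z * (1 - a))) = (Finv z - a * Finv (a * z)) / (1 - a) →
        z = ξ 0) ∧
      (∀ n : ℕ, 1 ≤ n → n < N → ξ n = ξ 0 * (1 - a)) ∧
      (ξ N = X₀ - ∑ n ∈ Finset.range N, ξ n) ∧
      (∀ n ≤ N, 0 < ξ n) := by
  classical
  -- basic facts about a
  have ha0 : 0 < a := ha ▸ Real.exp_pos _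
  have ha1 : a < 1 := by rw [ha]; exact Real.exp_lt_one_iff.mpr (by nlinarith)
  have h1a : (0:ℝ) < 1 - a := by linarith
  have hNpos : (0:ℝ) < (N : ℝ) := by exact_mod_cast Nat.lt_of_lt_of_le Nat.zero_lt_one hN
  -- derivative of F
  have hFd : ∀ x, HasDerivAt (Fi f) (f x) x := fun x =>
    intervalIntegral.integral_hasDerivAt_right (hf.intervalIntegrable _ _)
      (hf.stronglyMeasurableAtFilter _ _) hf.continuousAt
  have hFmono : StrictMono (Fi f) := by
    apply strictMono_of_deriv_pos
    intro x; rw [(hFd x).deriv]; exact hfpos x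
  have hgmono : StrictMono Finv := by
    intro x y hxy
    have := (hFmono.lt_iff_lt (a := Finv x) (b := Finv y))
    rw [hFinv₁, hFinv₁] at this
    exact this.mp hxy
  have hgsurj : Function.Surjective Finv := fun y => ⟨Fi f y, hFinv₂ y⟩
  have hgcont : Continuous Finv := by
    have := (StrictMono.orderIsoOfSurjective Finv hgmono hgsurj).continuous
    rwa [StrictMono.coe_orderIsoOfSurjective] at this
  have hF0 : Fi f 0 = 0 := intervalIntegral.integral_same
  have hg0 : Finv 0 = 0 := by
    have := hFinv₂ 0; rwa [hF0] at this
  have hG0 : Gf f Finv 0 = 0 := by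
    simp [Gf, Ft, hg0]
  -- derivative of G
  have hFtd : ∀ x, HasDerivAt (Ft f) (x * f x) x := fun x =>
    intervalIntegral.integral_hasDerivAt_right ((continuous_id.mul hf).intervalIntegrable _ _)
      ((continuous_id.mul hf).stronglyMeasurableAtFilter _ _) (continuous_id.mul hf).continuousAt
  have hgd : ∀ x, HasDerivAt Finv (f (Finv x))⁻¹ x := fun x =>
    HasDerivAt.of_local_left_inverse hgcont.continuousAt (hFd (Finv x))
      (ne_of_gt (hfpos _)) (Filter.Eventually.of_forall hFinv₁)
  have hGd : ∀ x, HasDerivAt (Gf f Finv) (Finv x) x := by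
    intro x
    have h1 : HasDerivAt (fun y => Ft f (Finv y))
        (Finv x * f (Finv x) * (f (Finv x))⁻¹) x := (hFtd (Finv x)).comp x (hgd x)
    have h2 : Finv x * f (Finv x) * (f (Finv x))⁻¹ = Finv x := by
      rw [mul_assoc, mul_inv_cancel₀ (ne_of_gt (hfpos _)), mul_one]
    rw [h2] at h1
    exact h1
  -- the function h
  set h : ℝ → ℝ := fun x : ℝ => Finv x - a * Finv (a * x) with hh_def
  have hHd : ∀ x, HasDerivAt (fun z => Gf f Finv z - Gf f Finv (a * z)) (h x) x := by
    intro x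
    have h2 : HasDerivAt (fun z : ℝ => a * z) a x := by
      simpa using (hasDerivAt_id x).const_mul a
    have h3 : HasDerivAt (fun z : ℝ => Gf f Finv (a * z)) (Finv (a * x) * a) x :=
      (hGd (a * x)).comp x h2
    have h4 := (hGd x).sub h3
    have h5 : Finv x - Finv (a * x) * a = h x := by rw [hh_def]; ring
    rw [h5] at h4
    exact h4
  have hgposz : ∀ z : ℝ, 0 < z → 0 < Finv z := by
    intro z hz
    have := hgmono hz; rwa [hg0] at this
  have hgnegz : ∀ z : ℝ, z < 0 → Finv z < 0 := by
    intro z hz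
    have := hgmono hz; rwa [hg0] at this
  have hh_app : ∀ z : ℝ, h z = Finv z - a * Finv (a * z) := fun _ => rfl
  have hhpos : ∀ z : ℝ, 0 < z → 0 < h z := by
    intro z hz
    have h1 : Finv (a * z) < Finv z := hgmono (by nlinarith)
    have h2 : 0 < Finv (a * z) := hgposz _ (mul_pos ha0 hz)
    rw [hh_app]; nlinarith
  have hh0 : h 0 = 0 := by rw [hh_app, mul_zero, hg0]; ring
  have hhcont : Continuous h := by
    rw [hh_def]
    have : Continuous fun x : ℝ => a * x := by continuity
    exact hgcont.sub (continuous_const.mul (hgcont.comp this))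
  have hhmono : StrictMono h := by
    rcases hhcont.strictMono_of_inj hh1 with hm | hanti
    · exact hm
    · exfalso
      have h1 := hanti (show (0:ℝ) < 1 by norm_num)
      rw [hh0] at h1
      exact absurd (hhpos 1 one_pos) (by linarith)
  -- the root ξ₀
  set M : ℝ := X₀ / (N * (1 - a)) with hM_def
  have hMpos : 0 < M := by rw [hM_def]; positivity
  set φ : ℝ → ℝ := fun z => (1 - a) * Finv (X₀ - N * (z * (1 - a))) - h z with hφ_def
  have hφcont : Continuous φ := by
    have c1 : Continuous fun z : ℝ => X₀ - N * (z * (1 - a)) := by continuity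
    exact (continuous_const.mul (hgcont.comp c1)).sub hhcont
  have hφ0 : 0 < φ 0 := by
    have : X₀ - (N:ℝ) * (0 * (1 - a)) = X₀ := by ring
    rw [hφ_def]; dsimp only; rw [this, hh0]
    have := hgposz X₀ hX₀
    nlinarith
  have hφM : φ M < 0 := by
    have hMe : X₀ - (N:ℝ) * (M * (1 - a)) = 0 := by
      rw [hM_def]; field_simp; ring
    rw [hφ_def]; dsimp only; rw [hMe, hg0]
    have := hhpos M hMpos
    nlinarith
  obtain ⟨ξ₀, hξ₀mem, hroot⟩ :=
    intermediate_value_Icc' (le_of_lt hMpos) hφcont.continuousOn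
      (Set.mem_Icc.mpr ⟨le_of_lt hφM, le_of_lt hφ0⟩)
  have hξ₀pos : 0 < ξ₀ := by
    rcases hξ₀mem.1.lt_or_eq with hlt | heq
    · exact hlt
    · exfalso; rw [← heq] at hroot; rw [hroot] at hφ0; exact lt_irrefl _ hφ0
  -- hroot : φ ξ₀ = 0
  set A : ℝ := X₀ - N * (ξ₀ * (1 - a)) with hA_def
  have hξeq : (1 - a) * Finv A = h ξ₀ := by
    have := hroot
    rw [hφ_def] at this; dsimp only at this
    rw [hA_def]; linarith
  -- the candidate strategy
  set ξ : ℕ → ℝ := fun n =>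
    if n = 0 then ξ₀ else if n < N then ξ₀ * (1 - a) else if n = N then A - a * ξ₀ else 0
    with hξ_def
  have hξ0 : ξ 0 = ξ₀ := by simp [hξ_def]
  have hξmid : ∀ n : ℕ, 1 ≤ n → n < N → ξ n = ξ₀ * (1 - a) := by
    intro n h1 h2
    simp only [hξ_def]
    rw [if_neg (by omega : ¬ n = 0), if_pos h2]
  have hξN : ξ N = A - a * ξ₀ := by
    simp [hξ_def, (by omega : ¬ N = 0)]
    exact fun h => absurd h (by omega)
  have hEξ : ∀ n : ℕ, n ≤ N → EvC a ξ n = if n = 0 then 0 else a * ξ₀ := by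
    intro n
    induction n with
    | zero => intro _; rfl
    | succ n ih =>
        intro hn
        have hrec : EvC a ξ (n+1) = a * (EvC a ξ n + ξ n) := rfl
        rw [hrec, ih (by omega)]
        rcases Nat.eq_zero_or_pos n with rfl | hpos
        · simp [hξ0]
        · have hnN : n < N := by omega
          rw [if_neg (by omega : ¬ n = 0), hξmid n hpos hnN,
            if_neg (by omega : ¬ n + 1 = 0)]
          ring
  have huξ : ∀ n : ℕ, n < N → EvC a ξ n + ξ n = ξ₀ := by
    intro n hn
    rcases Nat.eq_zero_or_pos n with rfl | hpos
    · have : EvC a ξ 0 = 0 := rfl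
      rw [this, hξ0]; ring
    · rw [hEξ n (le_of_lt hn), if_neg (by omega : ¬ n = 0), hξmid n hpos hn]; ring
  have huξN : EvC a ξ N + ξ N = A := by
    rw [hEξ N le_rfl, if_neg (by omega : ¬ N = 0), hξN]; ring
  -- the budget of ξ
  have hsumu : ∑ n ∈ Finset.range N, (EvC a ξ n + ξ n) = N * ξ₀ := by
    rw [Finset.sum_congr rfl (fun n hn => huξ n (Finset.mem_range.mp hn)),
      Finset.sum_const, Finset.card_range, nsmul_eq_mul]
  have hsumξ : ∑ n ∈ Finset.range (N+1), ξ n = X₀ := by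
    rw [sum_eq_u a ξ N, huξN, hsumu, hA_def]; ring
  -- cost of ξ
  have hCξ : C1C f Finv a N ξ
      = Gf f Finv A + N * (Gf f Finv ξ₀ - Gf f Finv (a * ξ₀)) := by
    rw [C1C, cost_eq_u f Finv a ξ hG0 N, huξN]
    congr 1
    rw [Finset.sum_congr rfl (fun n hn => by rw [huξ n (Finset.mem_range.mp hn)]),
      Finset.sum_const, Finset.card_range, nsmul_eq_mul]
  -- key comparison
  have key : ∀ y : ℕ → ℝ, (∑ n ∈ Finset.range (N + 1), y n = X₀) →
      C1C f Finv a N ξ ≤ C1C f Finv a N y ∧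
      ((∃ n, n ≤ N ∧ EvC a y n + y n ≠ EvC a ξ n + ξ n) →
        C1C f Finv a N ξ < C1C f Finv a N y) := by
    intro y hy
    set u : ℕ → ℝ := fun n => EvC a y n + y n with hu_def
    set S : ℝ := ∑ n ∈ Finset.range N, u n with hS_def
    have hbudget : u N + (1 - a) * S = X₀ := by
      rw [hS_def, hu_def]
      rw [← hy, sum_eq_u a y N]
    have hCy : C1C f Finv a N y
        = Gf f Finv (u N) + ∑ n ∈ Finset.range N, (Gf f Finv (u n) - Gf f Finv (a * u n)) := by
      rw [C1C, cost_eq_u f Finv a y hG0 N]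
    have ht1 : Gf f Finv A + Finv A * (u N - A) ≤ Gf f Finv (u N) :=
      tangent_le hGd hgmono A (u N)
    have ht2 : ∀ n, Gf f Finv ξ₀ - Gf f Finv (a * ξ₀) + h ξ₀ * (u n - ξ₀)
        ≤ Gf f Finv (u n) - Gf f Finv (a * u n) := by
      intro n
      have := tangent_le hHd hhmono ξ₀ (u n)
      linarith
    have hsum2 : ∑ n ∈ Finset.range N,
        (Gf f Finv ξ₀ - Gf f Finv (a * ξ₀) + h ξ₀ * (u n - ξ₀))
        = N * (Gf f Finv ξ₀ - Gf f Finv (a * ξ₀)) + h ξ₀ * (S - N * ξ₀) := by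
      rw [Finset.sum_add_distrib, Finset.sum_const, Finset.card_range, nsmul_eq_mul,
        ← Finset.mul_sum, Finset.sum_sub_distrib, Finset.sum_const, Finset.card_range,
        nsmul_eq_mul, hS_def]
    have hzero : Finv A * (u N - A) + h ξ₀ * (S - N * ξ₀) = 0 := by
      have e1 : u N - A + (1 - a) * (S - N * ξ₀) = 0 := by
        rw [hA_def] at *; linarith [hbudget]
      calc Finv A * (u N - A) + h ξ₀ * (S - N * ξ₀)
          = Finv A * (u N - A + (1 - a) * (S - N * ξ₀)) := by rw [← hξeq]; ring
        _ = 0 := by rw [e1, mul_zero]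
    constructor
    · have hsle : ∑ n ∈ Finset.range N,
          (Gf f Finv ξ₀ - Gf f Finv (a * ξ₀) + h ξ₀ * (u n - ξ₀))
          ≤ ∑ n ∈ Finset.range N, (Gf f Finv (u n) - Gf f Finv (a * u n)) :=
        Finset.sum_le_sum (fun n _ => ht2 n)
      rw [hsum2] at hsle
      rw [hCy, hCξ]
      linarith
    · rintro ⟨n, hnN, hne⟩
      rcases Nat.lt_or_ge n N with hlt | hge
      · -- strict in the sum part
        have hneq : u n ≠ ξ₀ := fun hcon => hne (hcon.trans (huξ n hlt).symm)
        have hslt : ∑ n ∈ Finset.range N,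
            (Gf f Finv ξ₀ - Gf f Finv (a * ξ₀) + h ξ₀ * (u n - ξ₀))
            < ∑ n ∈ Finset.range N, (Gf f Finv (u n) - Gf f Finv (a * u n)) := by
          apply Finset.sum_lt_sum (fun i _ => ht2 i)
          refine ⟨n, Finset.mem_range.mpr hlt, ?_⟩
          have := tangent_lt hHd hhmono ξ₀ (u n) hneq
          linarith
        rw [hsum2] at hslt
        rw [hCy, hCξ]
        linarith
      · have hnN' : n = N := by omega
        subst hnN'
        have hneq : u n ≠ A := fun hcon => hne (hcon.trans huξN.symm)
        have ht1' : Gf f Finv A + Finv A * (u n - A) < Gf f Finv (u n) :=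
          tangent_lt hGd hgmono A (u n) hneq
        have hsle : ∑ k ∈ Finset.range n,
            (Gf f Finv ξ₀ - Gf f Finv (a * ξ₀) + h ξ₀ * (u k - ξ₀))
            ≤ ∑ k ∈ Finset.range n, (Gf f Finv (u k) - Gf f Finv (a * u k)) :=
          Finset.sum_le_sum (fun k _ => ht2 k)
        rw [hsum2] at hsle
        rw [hCy, hCξ]
        linarith
  refine ⟨ξ, hsumξ, fun y hy => (key y hy).1, ?_, ?_, ?_, hξmid, ?_, ?_⟩
  · -- uniqueness of minimizer
    intro y hy hopt
    have hle : C1C f Finv a N y ≤ C1C f Finv a N ξ := hopt ξ hsumξ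
    have hueq : ∀ n, n ≤ N → EvC a y n + y n = EvC a ξ n + ξ n := by
      by_contra hcon
      push_neg at hcon
      obtain ⟨n, hn1, hn2⟩ := hcon
      have := (key y hy).2 ⟨n, hn1, hn2⟩
      linarith
    have hEeq : ∀ n, n ≤ N → EvC a y n = EvC a ξ n := by
      intro n
      induction n with
      | zero => intro _; rfl
      | succ n ih =>
          intro hn
          have h1 : EvC a y (n+1) = a * (EvC a y n + y n) := rfl
          have h2 : EvC a ξ (n+1) = a * (EvC a ξ n + ξ n) := rfl
          rw [h1, h2, hueq n (by omega)]
    intro n hn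
    have e1 := hueq n hn
    have e2 := hEeq n hn
    linarith
  · -- the equation for ξ₀
    rw [hξ0]
    rw [eq_div_iff (ne_of_gt h1a)]
    rw [show Finv ξ₀ - a * Finv (a * ξ₀) = h ξ₀ from (hh_app ξ₀).symm, ← hξeq, ← hA_def]
    ring
  · -- uniqueness of the root
    intro z hz
    rw [hξ0]
    have hz' : (1 - a) * Finv (X₀ - N * (z * (1 - a))) = h z := by
      rw [eq_div_iff (ne_of_gt h1a)] at hz
      rw [hh_app]; linarith [hz]
    rcases lt_trichotomy z ξ₀ with hlt | heq | hgt
    · exfalso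
      have h1 : h z < h ξ₀ := hhmono hlt
      have h2 : Finv A < Finv (X₀ - N * (z * (1 - a))) := by
        apply hgmono
        rw [hA_def]
        have := mul_lt_mul_of_pos_left (mul_lt_mul_of_pos_right hlt h1a) hNpos
        linarith
      have h3 := mul_lt_mul_of_pos_left h2 h1a
      linarith [hξeq, hz']
    · exact heq
    · exfalso
      have h1 : h ξ₀ < h z := hhmono hgt
      have h2 : Finv (X₀ - N * (z * (1 - a))) < Finv A := by
        apply hgmono
        rw [hA_def]
        have := mul_lt_mul_of_pos_left (mul_lt_mul_of_pos_right hgt h1a) hNpos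
        linarith
      have h3 := mul_lt_mul_of_pos_left h2 h1a
      linarith [hξeq, hz']
  · -- last order
    have := hsumξ
    rw [Finset.sum_range_succ] at this
    linarith
  · -- positivity
    intro n hn
    rcases Nat.eq_zero_or_pos n with rfl | hpos
    · rw [hξ0]; exact hξ₀pos
    · rcases Nat.lt_or_ge n N with hlt | hge
      · rw [hξmid n hpos hlt]; exact mul_pos hξ₀pos h1a
      · have : n = N := by omega
        subst this
        rw [hξN]
        -- A - a * ξ₀ > 0
        have hga : 0 < Finv (a * ξ₀) := hgposz _ (mul_pos ha0 hξ₀pos)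
        have hgg : Finv (a * ξ₀) < Finv ξ₀ := hgmono (mul_lt_of_lt_one_left hξ₀pos ha1)
        have hgA : Finv (a * ξ₀) < Finv A := by
          have hstep : (1 - a) * Finv (a * ξ₀) < (1 - a) * Finv A := by
            rw [hξeq, hh_app]; linarith
          exact (mul_lt_mul_iff_right₀ h1a).mp hstep
        have : a * ξ₀ < A := by
          by_contra hcon
          push_neg at hcon
          rcases hcon.lt_or_eq with hlt | heq
          · exact absurd (hgmono hlt) (by linarith)
          · rw [heq] at hgA; exact lt_irrefl _ hgA
        linarith
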